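/- For every natural number n ≥ 1, the coefficient of Y^{2^n} in F n, viewed as a polynomial in the single variable Y with coefficients in ℤ[k, b, X], equals k^{2^n − 1}·b^{2^{n−1}}. Equivalently, the only exponent vector in the support of F n whose Y-exponent equals 2^n is the monomial k^{2^n − 1}·b^{2^{n−1}}·Y^{2^n}, and it occurs with coefficient 1. -/

import Mathlib

open MvPolynomial

/-- The pair `(Fₙ, Gₙ)` in `ℤ[k, b, X, Y]` (variables `0 ↦ k`, `1 ↦ b`, `2 ↦ X`, `3 ↦ Y`),
defined by `F 1 = k (X² + b Y²)`, `G 1 = X Y`,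
`F (n+1) = k ((F n)² + b (G n)²)`, `G (n+1) = (F n) (G n)`. -/
noncomputable def FG : ℕ → MvPolynomial (Fin 4) ℤ × MvPolynomial (Fin 4) ℤ
  | 0 => (0, 0)
  | 1 => (X 0 * (X 2 ^ 2 + X 1 * X 3 ^ 2), X 2 * X 3)
  | n + 2 =>
      (X 0 * ((FG (n + 1)).1 ^ 2 + X 1 * (FG (n + 1)).2 ^ 2),
        (FG (n + 1)).1 * (FG (n + 1)).2)

noncomputable def F (n : ℕ) : MvPolynomial (Fin 4) ℤ := (FG n).1
noncomputable def G (n : ℕ) : MvPolynomial (Fin 4) ℤ := (FG n).2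

lemma F_succ {n : ℕ} (hn : 1 ≤ n) : F (n + 1) = X 0 * (F n ^ 2 + X 1 * G n ^ 2) := by
  obtain ⟨k, rfl⟩ : ∃ k, n = k + 1 := ⟨n - 1, by omega⟩
  rfl

lemma G_succ {n : ℕ} (hn : 1 ≤ n) : G (n + 1) = F n * G n := by
  obtain ⟨k, rfl⟩ : ∃ k, n = k + 1 := ⟨n - 1, by omega⟩
  rfl

noncomputable def mu (n : ℕ) : Fin 4 →₀ ℕ :=
  Finsupp.single (0 : Fin 4) (2 ^ n - 1) + Finsupp.single 1 (2 ^ (n - 1)) +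
    Finsupp.single 3 (2 ^ n)

lemma mu_apply (n : ℕ) : mu n 0 = 2 ^ n - 1 ∧ mu n 1 = 2 ^ (n - 1) ∧ mu n 2 = 0 ∧
    mu n 3 = 2 ^ n := by
  simp [mu, Finsupp.single_apply]

lemma ymax_mul {p q : MvPolynomial (Fin 4) ℤ} {c d : ℕ}
    (hp : ∀ a : Fin 4 →₀ ℕ, coeff a p ≠ 0 → a 3 ≤ c)
    (hq : ∀ a : Fin 4 →₀ ℕ, coeff a q ≠ 0 → a 3 ≤ d) :
    ∀ m : Fin 4 →₀ ℕ, coeff m (p * q) ≠ 0 → m 3 ≤ c + d := by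
  intro m hm
  rw [coeff_mul] at hm
  obtain ⟨x, hx, hne⟩ := Finset.exists_ne_zero_of_sum_ne_zero hm
  rw [Finset.HasAntidiagonal.mem_antidiagonal] at hx
  have h1 := hp x.1 (left_ne_zero_of_mul hne)
  have h2 := hq x.2 (right_ne_zero_of_mul hne)
  have h3 : x.1 3 + x.2 3 = m 3 := by rw [← hx]; simp
  omega

lemma ymax_X (i : Fin 4) {c : ℕ} (hc : (Finsupp.single i 1 : Fin 4 →₀ ℕ) 3 ≤ c) :
    ∀ a : Fin 4 →₀ ℕ, coeff a (X i : MvPolynomial (Fin 4) ℤ) ≠ 0 → a 3 ≤ c := by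
  intro a ha
  rw [coeff_X'] at ha
  split at ha
  · next h => exact h ▸ hc
  · simp at ha

lemma key : ∀ n : ℕ, 1 ≤ n →
    (∀ m : Fin 4 →₀ ℕ, coeff m (F n) ≠ 0 → m 3 ≤ 2 ^ n) ∧
    (∀ m : Fin 4 →₀ ℕ, coeff m (G n) ≠ 0 → m 3 ≤ 2 ^ n - 1) ∧
    (∀ m : Fin 4 →₀ ℕ, m 3 = 2 ^ n → coeff m (F n) = if m = mu n then 1 else 0) := by
  intro n hn
  induction n, hn using Nat.le_induction with
  | base =>
    have e1 : (X 0 * X 2 ^ 2 : MvPolynomial (Fin 4) ℤ) =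
        monomial (Finsupp.single 0 1 + Finsupp.single 2 2) 1 := by
      rw [X_pow_eq_monomial, X, monomial_mul, one_mul]
    have e2 : (X 0 * (X 1 * X 3 ^ 2) : MvPolynomial (Fin 4) ℤ) = monomial (mu 1) 1 := by
      rw [X_pow_eq_monomial, X, X, monomial_mul, monomial_mul, one_mul, one_mul, mu]
      norm_num [add_assoc]
    have hF1 : F 1 = monomial (Finsupp.single 0 1 + Finsupp.single 2 2) 1 +
        monomial (mu 1) 1 := by
      show X 0 * (X 2 ^ 2 + X 1 * X 3 ^ 2) = _
      rw [mul_add, e1, e2]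
    have hG1 : G 1 = monomial (Finsupp.single 2 1 + Finsupp.single 3 1) 1 := by
      show X 2 * X 3 = _
      rw [X, X, monomial_mul, one_mul]
    have hs1 : ((Finsupp.single 0 1 + Finsupp.single 2 2 : Fin 4 →₀ ℕ)) 3 = 0 := by
      simp [Finsupp.single_apply]
    have hmu13 : mu 1 3 = 2 := (mu_apply 1).2.2.2
    refine ⟨?_, ?_, ?_⟩
    · intro m hm
      rw [hF1, coeff_add, coeff_monomial, coeff_monomial] at hm
      by_cases h1 : (Finsupp.single 0 1 + Finsupp.single 2 2 : Fin 4 →₀ ℕ) = m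
      · rw [← h1, hs1]; norm_num
      · by_cases h2 : mu 1 = m
        · rw [← h2, hmu13]; norm_num
        · rw [if_neg h1, if_neg h2] at hm; simp at hm
    · intro m hm
      rw [hG1, coeff_monomial] at hm
      by_cases h1 : (Finsupp.single 2 1 + Finsupp.single 3 1 : Fin 4 →₀ ℕ) = m
      · rw [← h1]; simp [Finsupp.single_apply]
      · rw [if_neg h1] at hm; simp at hm
    · intro m hm3
      rw [hF1, coeff_add, coeff_monomial, coeff_monomial]
      have h1 : ¬((Finsupp.single 0 1 + Finsupp.single 2 2 : Fin 4 →₀ ℕ) = m) := by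
        intro h; rw [← h, hs1] at hm3; norm_num at hm3
      rw [if_neg h1, zero_add]
      norm_num [eq_comm]
  | succ n hn ih =>
    obtain ⟨hFbd, hGbd, hFco⟩ := ih
    have h1 : (1:ℕ) ≤ 2 ^ n := Nat.one_le_two_pow
    have hX1 : ∀ a : Fin 4 →₀ ℕ, coeff a (X 1 : MvPolynomial (Fin 4) ℤ) ≠ 0 → a 3 ≤ 0 :=
      ymax_X 1 (by simp [Finsupp.single_apply])
    have hX0 : ∀ a : Fin 4 →₀ ℕ, coeff a (X 0 : MvPolynomial (Fin 4) ℤ) ≠ 0 → a 3 ≤ 0 :=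
      ymax_X 0 (by simp [Finsupp.single_apply])
    have hGsq : ∀ a : Fin 4 →₀ ℕ, coeff a (X 1 * G n ^ 2) ≠ 0 →
        a 3 ≤ 0 + ((2 ^ n - 1) + (2 ^ n - 1)) := by
      refine ymax_mul hX1 ?_
      rw [sq]; exact ymax_mul hGbd hGbd
    have hsum : ∀ a : Fin 4 →₀ ℕ, coeff a (F n ^ 2 + X 1 * G n ^ 2) ≠ 0 →
        a 3 ≤ 2 ^ n + 2 ^ n := by
      intro a ha
      rw [coeff_add] at ha
      have : coeff a (F n ^ 2) ≠ 0 ∨ coeff a (X 1 * G n ^ 2) ≠ 0 := by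
        rcases eq_or_ne (coeff a (F n ^ 2)) 0 with h | h
        · right; rw [h, zero_add] at ha; exact ha
        · left; exact h
      rcases this with h | h
      · rw [sq] at h; exact ymax_mul hFbd hFbd a h
      · have := hGsq a h; omega
    have hFbd' : ∀ m : Fin 4 →₀ ℕ, coeff m (F (n+1)) ≠ 0 → m 3 ≤ 2 ^ (n+1) := by
      rw [F_succ hn]
      intro m hm
      have := ymax_mul hX0 hsum m hm
      rw [pow_succ]
      omega
    have hGbd' : ∀ m : Fin 4 →₀ ℕ, coeff m (G (n+1)) ≠ 0 → m 3 ≤ 2 ^ (n+1) - 1 := by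
      rw [G_succ hn]
      intro m hm
      have := ymax_mul hFbd hGbd m hm
      rw [pow_succ]
      omega
    refine ⟨hFbd', hGbd', ?_⟩
    intro m hm3
    rw [F_succ hn, mul_comm, coeff_mul_X']
    by_cases h0 : (0 : Fin 4) ∈ m.support
    · rw [if_pos h0]
      set m' : Fin 4 →₀ ℕ := m - Finsupp.single 0 1 with hm'
      have hm'3 : m' 3 = 2 ^ (n+1) := by
        rw [hm', Finsupp.tsub_apply]
        simp [Finsupp.single_apply, hm3]
      rw [coeff_add]
      have h2 : coeff m' (X 1 * G n ^ 2) = 0 := by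
        by_contra h
        have := hGsq m' h
        rw [hm'3, pow_succ] at this
        omega
      rw [h2, add_zero]
      have hmu3 : mu n 3 = 2 ^ n := (mu_apply n).2.2.2
      have hterm : ∀ b : (Fin 4 →₀ ℕ) × (Fin 4 →₀ ℕ), b.1 + b.2 = m' →
          coeff b.1 (F n) * coeff b.2 (F n) ≠ 0 → b = (mu n, mu n) := by
        intro b hb hne
        have hb1 := left_ne_zero_of_mul hne
        have hb2 := right_ne_zero_of_mul hne
        have e1 := hFbd b.1 hb1
        have e2 := hFbd b.2 hb2
        have e3 : b.1 3 + b.2 3 = 2 ^ (n+1) := by rw [← hm'3, ← hb]; simp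
        have e4 : b.1 3 = 2 ^ n ∧ b.2 3 = 2 ^ n := by rw [pow_succ] at e3; omega
        rw [hFco b.1 e4.1] at hb1
        rw [hFco b.2 e4.2] at hb2
        have hb1' : b.1 = mu n := by by_contra hx; rw [if_neg hx] at hb1; exact hb1 rfl
        have hb2' : b.2 = mu n := by by_contra hx; rw [if_neg hx] at hb2; exact hb2 rfl
        exact Prod.ext hb1' hb2'
      have hsq : coeff m' (F n ^ 2) = if m' = mu n + mu n then 1 else 0 := by
        rw [sq, coeff_mul]
        by_cases hmm : m' = mu n + mu n
        · rw [if_pos hmm]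
          rw [Finset.sum_eq_single_of_mem (mu n, mu n)
            (by rw [Finset.HasAntidiagonal.mem_antidiagonal]; exact hmm.symm)]
          · rw [hFco (mu n) hmu3, if_pos rfl]; norm_num
          · intro b hb hbne
            rw [Finset.HasAntidiagonal.mem_antidiagonal] at hb
            by_contra hne
            exact hbne (hterm b hb hne)
        · rw [if_neg hmm]
          apply Finset.sum_eq_zero
          intro b hb
          rw [Finset.HasAntidiagonal.mem_antidiagonal] at hb
          by_contra hne
          have := hterm b hb hne
          apply hmm
          rw [← hb, this]
      rw [hsq]
      have hm0 : 1 ≤ m 0 := by rw [Finsupp.mem_support_iff] at h0; omega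
      have hmukey : mu (n+1) = Finsupp.single 0 1 + (mu n + mu n) := by
        obtain ⟨k, rfl⟩ : ∃ k, n = k + 1 := ⟨n - 1, by omega⟩
        ext i
        fin_cases i <;>
          simp [mu, Finsupp.single_apply, Finsupp.add_apply, pow_succ] <;> omega
      have hle : Finsupp.single (0 : Fin 4) 1 ≤ m := Finsupp.single_le_iff.2 hm0
      have hiff : m' = mu n + mu n ↔ m = mu (n+1) := by
        rw [hm', tsub_eq_iff_eq_add_of_le hle, hmukey, add_comm (Finsupp.single 0 1)]
      by_cases hc : m = mu (n+1)
      · rw [if_pos hc, if_pos (hiff.2 hc)]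
      · rw [if_neg hc, if_neg (fun h => hc (hiff.1 h))]
    · rw [if_neg h0]
      have : m ≠ mu (n+1) := by
        intro h
        apply h0
        rw [Finsupp.mem_support_iff, h]
        have := (mu_apply (n+1)).1
        have h2 : (1:ℕ) ≤ 2 ^ (n+1) := Nat.one_le_two_pow
        simp only [this]
        omega
      rw [if_neg this]

/-- The coefficient of `Y^(2^n)` in `F n`: the unique exponent vector in the support of
`F n` with `Y`-exponent `2^n` is that of `k^(2^n - 1) * b^(2^(n-1)) * Y^(2^n)`,
with coefficient `1`. -/
theorem coeff_Y_pow_F (n : ℕ) (hn : 1 ≤ n) :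
    (∀ m ∈ (F n).support, m 3 = 2 ^ n →
        m = Finsupp.single (0 : Fin 4) (2 ^ n - 1) + Finsupp.single 1 (2 ^ (n - 1)) +
          Finsupp.single 3 (2 ^ n)) ∧
    coeff
      (Finsupp.single (0 : Fin 4) (2 ^ n - 1) + Finsupp.single 1 (2 ^ (n - 1)) +
        Finsupp.single 3 (2 ^ n)) (F n) = 1 := by
  obtain ⟨-, -, hFco⟩ := key n hn
  constructor
  · intro m hm hm3
    rw [mem_support_iff, hFco m hm3] at hm
    show m = mu n
    by_contra hx
    rw [if_neg hx] at hm
    exact hm rfl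
  · show coeff (mu n) (F n) = 1
    rw [hFco (mu n) (mu_apply n).2.2.2, if_pos rfl]
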